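/- (Decomposition of piecewise affine functions enables big-C reformulation) Let φ(x) = max_{1≤i≤I} (aᵢᵀx + αᵢ) − max_{1≤j≤J} (bⱼᵀx + βⱼ), and suppose x ranges over a set on which t − (aᵢᵀx + αᵢ) ≤ C for all i, where t = max_i (aᵢᵀx + αᵢ) and C > 0. Then φ(x) ≥ 0 holds if and only if there exist t ∈ ℝ and v ∈ {0,1}^I such that t ≥ max{max_i (aᵢᵀx + αᵢ), max_j (bⱼᵀx + βⱼ)}, t − (aᵢᵀx + αᵢ) ≤ C vᵢ for all i, and ∑_i vᵢ ≤ I − 1. -/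

import Mathlib

/-- Dot product on `ℝ^n`. -/
def dotp {n : ℕ} (u v : Fin n → ℝ) : ℝ := ∑ i, u i * v i

/-- Big-C mixed-integer reformulation of the piecewise-affine constraint `φ(x) ≥ 0`,
where `φ(x) = max_i (aᵢᵀx + αᵢ) - max_j (bⱼᵀx + βⱼ)` (indices `i ∈ Fin (I+1)`,
`j ∈ Fin (J+1)`, so there are `I+1` affine pieces in the first max). -/
theorem piecewise_affine_bigC_reformulation {n I J : ℕ}
    (a : Fin (I + 1) → Fin n → ℝ) (α : Fin (I + 1) → ℝ)
    (b : Fin (J + 1) → Fin n → ℝ) (β : Fin (J + 1) → ℝ)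
    (C : ℝ) (hC : 0 < C) (x : Fin n → ℝ)
    (hCx : ∀ k, (Finset.univ.sup' Finset.univ_nonempty
        (fun i => dotp (a i) x + α i)) - (dotp (a k) x + α k) ≤ C) :
    (0 ≤ (Finset.univ.sup' Finset.univ_nonempty (fun i => dotp (a i) x + α i))
        - (Finset.univ.sup' Finset.univ_nonempty (fun j => dotp (b j) x + β j))) ↔
    (∃ (t : ℝ) (v : Fin (I + 1) → ℝ),
      (∀ i, v i = 0 ∨ v i = 1) ∧
      max (Finset.univ.sup' Finset.univ_nonempty (fun i => dotp (a i) x + α i))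
          (Finset.univ.sup' Finset.univ_nonempty (fun j => dotp (b j) x + β j)) ≤ t ∧
      (∀ i, t - (dotp (a i) x + α i) ≤ C * v i) ∧
      (∑ i, v i) ≤ (I + 1 : ℝ) - 1) := by
  set A := Finset.univ.sup' Finset.univ_nonempty (fun i => dotp (a i) x + α i) with hA
  set B := Finset.univ.sup' Finset.univ_nonempty (fun j => dotp (b j) x + β j) with hB
  constructor
  · intro h
    obtain ⟨i₀, _, hi₀⟩ := Finset.exists_mem_eq_sup' (Finset.univ_nonempty)
      (fun i => dotp (a i) x + α i)
    refine ⟨A, fun i => if i = i₀ then 0 else 1, fun i => by by_cases h : i = i₀ <;> simp [h],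
      max_le le_rfl (by linarith), fun i => ?_, ?_⟩
    · by_cases hi : i = i₀
      · simp [hi, ← hi₀]
        exact ⟨i₀, hi₀.le⟩
      · simp only [hi, if_false, mul_one]
        exact hCx i
    · have : (∑ i : Fin (I+1), if i = i₀ then (0:ℝ) else 1)
          = ∑ i : Fin (I+1), (1 - if i = i₀ then (1:ℝ) else 0) := by
        apply Finset.sum_congr rfl
        intro i _
        by_cases h : i = i₀ <;> simp [h]
      rw [this, Finset.sum_sub_distrib, Finset.sum_ite_eq' Finset.univ i₀ (fun _ => (1:ℝ))]
      simp
  · rintro ⟨t, v, hv01, hmax, hvi, hsum⟩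
    have hex : ∃ i, v i = 0 := by
      by_contra hno
      push_neg at hno
      have h1 : ∀ i, v i = 1 := fun i => (hv01 i).resolve_left (hno i)
      have : (∑ i, v i) = (I + 1 : ℝ) := by
        simp [h1]
      linarith
    obtain ⟨i₀, hi₀⟩ := hex
    have h1 : t - (dotp (a i₀) x + α i₀) ≤ 0 := by
      have := hvi i₀; rw [hi₀] at this; simpa using this
    have h2 : dotp (a i₀) x + α i₀ ≤ A :=
      Finset.le_sup' (fun i => dotp (a i) x + α i) (Finset.mem_univ i₀)
    have h3 : B ≤ t := le_trans (le_max_right _ _) hmax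
    linarith
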